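/- Let O be a finite set, w a weight on K_O, and T a minimum spanning tree of w. Then T is also a minimum spanning tree of the single linkage ultra-metric SL(w). -/

import Mathlib

open SimpleGraph Finset

variable {V : Type*} [Fintype V] [DecidableEq V]

/-- Total weight of (the edge set of) a simple graph `T` under edge weights `w`. -/
noncomputable def totalWeight (w : Sym2 V → ℝ) (T : SimpleGraph V) : ℝ :=
  ∑ e ∈ (Set.toFinite T.edgeSet).toFinset, w e

/-- `T` is a minimum spanning tree of the complete graph on `V` with weights `w`. -/
def IsMST (w : Sym2 V → ℝ) (T : SimpleGraph V) : Prop :=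
  T.IsTree ∧ ∀ T' : SimpleGraph V, T'.IsTree → totalWeight w T ≤ totalWeight w T'

/-- A weight on the complete graph: nonnegative, vanishing on the diagonal. -/
def IsWeight (d : Sym2 V → ℝ) : Prop :=
  (∀ e, 0 ≤ d e) ∧ ∀ x : V, d s(x, x) = 0

/-- An ultra-metric, encoded as a function on unordered pairs. -/
def IsUltrametric (u : Sym2 V → ℝ) : Prop :=
  IsWeight u ∧ ∀ x y z : V, u s(x, z) ≤ max (u s(x, y)) (u s(y, z))

/-- A (pseudo-)metric, encoded as a function on unordered pairs. -/
def IsMetric (d : Sym2 V → ℝ) : Prop :=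
  IsWeight d ∧ ∀ x y z : V, d s(x, z) ≤ d s(x, y) + d s(y, z)

/-- The single linkage ultra-metric of a weight `d`. -/
noncomputable def SL (d : Sym2 V → ℝ) (e : Sym2 V) : ℝ :=
  sSup {r | ∃ u : Sym2 V → ℝ, IsUltrametric u ∧ u ≤ d ∧ u e = r}

/-- Maximum weight of an edge along a walk (0 for the empty walk). -/
noncomputable def pathMax (w : Sym2 V → ℝ) {T : SimpleGraph V} {x y : V}
    (p : T.Walk x y) : ℝ :=
  (p.edges.map w).foldr max 0

/-- Sum of weights of the edges along a walk. -/
noncomputable def pathSum (w : Sym2 V → ℝ) {T : SimpleGraph V} {x y : V}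
    (p : T.Walk x y) : ℝ :=
  (p.edges.map w).sum

/-- `alpha T hT w x y`: max weight of an edge on the unique path in the tree `T` from `x` to `y`. -/
noncomputable def alpha (T : SimpleGraph V) (hT : T.IsTree) (w : Sym2 V → ℝ)
    (x y : V) : ℝ :=
  pathMax w (hT.existsUnique_path x y).exists.choose

/-- `omega T hT w x y`: the tree metric, the sum of weights along the unique path in `T`. -/
noncomputable def treeOmega (T : SimpleGraph V) (hT : T.IsTree) (w : Sym2 V → ℝ)
    (x y : V) : ℝ :=
  pathSum w (hT.existsUnique_path x y).exists.choose

/-- Ultra-metric as a two-variable function. -/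
def IsUltrametricFn (u : V → V → ℝ) : Prop :=
  (∀ x y, 0 ≤ u x y) ∧ (∀ x, u x x = 0) ∧ (∀ x y, u x y = u y x) ∧
    ∀ x y z, u x z ≤ max (u x y) (u y z)

set_option linter.unusedSectionVars false

-- list lemmas
lemma aux_le_foldr_max {l : List ℝ} {x : ℝ} (hx : x ∈ l) : x ≤ l.foldr max 0 := by
  induction l with
  | nil => simp at hx
  | cons a l ih =>
    rcases List.mem_cons.1 hx with rfl | h
    · exact le_max_left _ _
    · exact (ih h).trans (le_max_right _ _)

lemma aux_foldr_max_nonneg (l : List ℝ) : 0 ≤ l.foldr max 0 := by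
  induction l with
  | nil => simp
  | cons a l ih => exact ih.trans (le_max_right _ _)

lemma aux_foldr_max_le {l : List ℝ} {c : ℝ} (hc : 0 ≤ c) (h : ∀ x ∈ l, x ≤ c) :
    l.foldr max 0 ≤ c := by
  induction l with
  | nil => simpa
  | cons a l ih =>
    exact max_le (h a (by simp)) (ih fun x hx => h x (List.mem_cons_of_mem _ hx))

-- pathMax lemmas
lemma aux_le_pathMax (w : Sym2 V → ℝ) {T : SimpleGraph V} {x y : V} (p : T.Walk x y)
    {e : Sym2 V} (he : e ∈ p.edges) : w e ≤ pathMax w p :=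
  aux_le_foldr_max (List.mem_map_of_mem (f := w) he)

lemma aux_pathMax_nonneg (w : Sym2 V → ℝ) {T : SimpleGraph V} {x y : V} (p : T.Walk x y) :
    0 ≤ pathMax w p := aux_foldr_max_nonneg _

lemma aux_pathMax_le (w : Sym2 V → ℝ) {T : SimpleGraph V} {x y : V} (p : T.Walk x y)
    {c : ℝ} (hc : 0 ≤ c) (h : ∀ e ∈ p.edges, w e ≤ c) : pathMax w p ≤ c := by
  refine aux_foldr_max_le hc ?_
  intro x hx
  obtain ⟨e, he, rfl⟩ := List.mem_map.1 hx
  exact h e he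

-- alpha via arbitrary path
lemma aux_alpha_eq {T : SimpleGraph V} (ht : T.IsTree) (w : Sym2 V → ℝ) {x y : V}
    (p : T.Walk x y) (hp : p.IsPath) : alpha T ht w x y = pathMax w p := by
  have h := (ht.existsUnique_path x y).unique
      (Exists.choose_spec (ht.existsUnique_path x y).exists) hp
  rw [alpha, h]

lemma aux_alpha_self {T : SimpleGraph V} (ht : T.IsTree) (w : Sym2 V → ℝ) (x : V) :
    alpha T ht w x x = 0 := by
  rw [aux_alpha_eq ht w (Walk.nil) Walk.IsPath.nil]
  simp [pathMax]

lemma aux_alpha_nonneg {T : SimpleGraph V} (ht : T.IsTree) (w : Sym2 V → ℝ) (x y : V) :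
    0 ≤ alpha T ht w x y := aux_pathMax_nonneg _ _

lemma aux_alpha_comm {T : SimpleGraph V} (ht : T.IsTree) (w : Sym2 V → ℝ) (x y : V) :
    alpha T ht w x y = alpha T ht w y x := by
  obtain ⟨p, hp⟩ := (ht.existsUnique_path x y).exists
  rw [aux_alpha_eq ht w p hp, aux_alpha_eq ht w p.reverse hp.reverse]
  refine le_antisymm ?_ ?_
  · exact aux_pathMax_le w _ (aux_pathMax_nonneg _ _) fun e he =>
      aux_le_pathMax w _ (by simpa using he)
  · exact aux_pathMax_le w _ (aux_pathMax_nonneg _ _) fun e he =>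
      aux_le_pathMax w _ (by simpa using he : e ∈ p.edges)

-- unique path edges contained in any walk
lemma aux_path_edges_subset {T : SimpleGraph V} (ht : T.IsAcyclic) {x y : V}
    {p : T.Walk x y} (hp : p.IsPath) (q : T.Walk x y) : p.edges ⊆ q.edges := by
  have h : (⟨p, hp⟩ : T.Path x y) = q.toPath := ht.path_unique _ _
  intro e he
  apply Walk.edges_toPath_subset q
  have : p = (q.toPath : T.Walk x y) := congrArg Subtype.val h
  rwa [← this]

lemma aux_alpha_ultra {T : SimpleGraph V} (ht : T.IsTree) (w : Sym2 V → ℝ) (x y z : V) :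
    alpha T ht w x z ≤ max (alpha T ht w x y) (alpha T ht w y z) := by
  obtain ⟨p, hp⟩ := (ht.existsUnique_path x y).exists
  obtain ⟨q, hq⟩ := (ht.existsUnique_path y z).exists
  obtain ⟨r, hr⟩ := (ht.existsUnique_path x z).exists
  rw [aux_alpha_eq ht w r hr, aux_alpha_eq ht w p hp, aux_alpha_eq ht w q hq]
  have hsub := aux_path_edges_subset ht.IsAcyclic hr (p.append q)
  refine aux_pathMax_le w _ (le_max_of_le_left (aux_pathMax_nonneg _ _)) fun e he => ?_
  have := hsub he
  rw [Walk.edges_append, List.mem_append] at this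
  rcases this with h | h
  · exact (aux_le_pathMax w p h).trans (le_max_left _ _)
  · exact (aux_le_pathMax w q h).trans (le_max_right _ _)

lemma aux_alpha_adj {T : SimpleGraph V} (ht : T.IsTree) {w : Sym2 V → ℝ}
    (hw : ∀ e, 0 ≤ w e) {x y : V} (h : T.Adj x y) :
    alpha T ht w x y = w s(x, y) := by
  rw [aux_alpha_eq ht w (Walk.cons h Walk.nil) (by simp [h.ne])]
  simp [pathMax, max_eq_left (hw s(x,y))]

-- deleting a tree edge disconnects its endpoints
lemma aux_not_reach_delete {S : SimpleGraph V} (hA : S.IsAcyclic) {u v : V}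
    (h : S.Adj u v) : ¬ (S.deleteEdges {s(u, v)}).Reachable u v := by
  intro hr
  have : S.Adj u v ∧ (S \ fromEdgeSet {s(u, v)}).Reachable u v := ⟨h, hr⟩
  obtain ⟨c, q, hq, -⟩ := (adj_and_reachable_delete_edges_iff_exists_cycle).1 this
  exact hA q hq

-- everything reaches one of the two endpoints after deleting an edge
lemma aux_reach_or {S : SimpleGraph V} (hc : S.Connected) (u v : V) (c : V) :
    (S.deleteEdges {s(u, v)}).Reachable c u ∨ (S.deleteEdges {s(u, v)}).Reachable c v := by
  have key : ∀ (x y : V) (_ : S.Walk x y),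
      ((S.deleteEdges {s(u, v)}).Reachable y u ∨ (S.deleteEdges {s(u, v)}).Reachable y v) →
      ((S.deleteEdges {s(u, v)}).Reachable x u ∨ (S.deleteEdges {s(u, v)}).Reachable x v) := by
    intro x y q
    induction q with
    | nil => exact id
    | @cons a d _ h q ih =>
      intro hy
      by_cases heq : s(a, d) = s(u, v)
      · rw [Sym2.eq_iff] at heq
        rcases heq with ⟨rfl, rfl⟩ | ⟨rfl, rfl⟩
        · exact Or.inl (Reachable.refl _)
        · exact Or.inr (Reachable.refl _)
      · have hadj : (S.deleteEdges {s(u, v)}).Adj a d := by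
          rw [deleteEdges_adj]
          exact ⟨h, by simpa using heq⟩
        rcases ih hy with h' | h'
        · exact Or.inl (hadj.reachable.trans h')
        · exact Or.inr (hadj.reachable.trans h')
  obtain ⟨q⟩ := hc.preconnected c u
  exact key c u q (Or.inl (Reachable.refl _))

-- a D-reachability implies no edge s(u,v) on the unique S-path between them
lemma aux_not_reach_of_mem_path {S : SimpleGraph V} (hS : S.IsTree) {a b u v : V}
    {p : S.Walk a b} (hp : p.IsPath) (he : s(u, v) ∈ p.edges) :
    ¬ (S.deleteEdges {s(u, v)}).Reachable a b := by
  intro hr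
  obtain ⟨q⟩ := hr
  set D := S.deleteEdges {s(u, v)} with hD
  have hq' : (q.toPath : D.Walk a b).IsPath := (q.toPath).2
  have hsub : ∀ e ∈ ((q.toPath : D.Walk a b)).edges, e ∈ S.edgeSet := by
    intro e hee
    have h1 := Walk.edges_subset_edgeSet _ hee
    rw [edgeSet_deleteEdges] at h1
    exact h1.1
  set r := ((q.toPath : D.Walk a b)).transfer S hsub with hr'
  have hrp : r.IsPath := hq'.transfer _
  have huniq : r = p := (hS.existsUnique_path a b).unique hrp hp
  have : s(u, v) ∈ r.edges := huniq ▸ he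
  rw [hr', Walk.edges_transfer] at this
  have := Walk.edges_subset_edgeSet _ this
  rw [edgeSet_deleteEdges] at this
  exact this.2 rfl

-- the two sides of a deleted path edge
lemma aux_sides {S : SimpleGraph V} (hS : S.IsTree) {a b u v : V}
    {p : S.Walk a b} (hp : p.IsPath) (he : s(u, v) ∈ p.edges) :
    ((S.deleteEdges {s(u, v)}).Reachable a u ∧ (S.deleteEdges {s(u, v)}).Reachable b v) ∨
    ((S.deleteEdges {s(u, v)}).Reachable a v ∧ (S.deleteEdges {s(u, v)}).Reachable b u) := by
  set D := S.deleteEdges {s(u, v)} with hD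
  have hnab : ¬ D.Reachable a b := aux_not_reach_of_mem_path hS hp he
  rcases aux_reach_or hS.isConnected u v a with ha | ha <;>
    rcases aux_reach_or hS.isConnected u v b with hb | hb
  · exact absurd (ha.trans hb.symm) hnab
  · exact Or.inl ⟨ha, hb⟩
  · exact Or.inr ⟨ha, hb⟩
  · exact absurd (ha.trans hb.symm) hnab

-- the swap lemma
lemma aux_swap {S : SimpleGraph V} (hS : S.IsTree) {a b u v : V} (hab : a ≠ b)
    {p : S.Walk a b} (hp : p.IsPath) (he : s(u, v) ∈ p.edges) :
    ((S.deleteEdges {s(u, v)}) ⊔ fromEdgeSet {s(a, b)}).IsTree ∧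
      ((S.deleteEdges {s(u, v)}) ⊔ fromEdgeSet {s(a, b)}).edgeSet =
        (S.edgeSet \ {s(u, v)}) ∪ {s(a, b)} := by
  classical
  set D := S.deleteEdges {s(u, v)} with hD
  set S' := D ⊔ fromEdgeSet {s(a, b)} with hS'
  have huv : S.Adj u v := p.adj_of_mem_edges he
  have hnr : ¬ D.Reachable u v := aux_not_reach_delete hS.IsAcyclic huv
  have hDS : D ≤ S := deleteEdges_le _
  have hDS' : D ≤ S' := le_sup_left
  have hedge : S'.edgeSet = (S.edgeSet \ {s(u, v)}) ∪ {s(a, b)} := by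
    rw [hS', edgeSet_sup, hD, edgeSet_deleteEdges, edgeSet_fromEdgeSet]
    congr 1
    ext e
    simp only [Set.mem_diff, Set.mem_singleton_iff, Set.mem_setOf_eq]
    constructor
    · exact fun h => h.1
    · rintro rfl
      exact ⟨rfl, by simpa [Sym2.mk_isDiag_iff] using hab⟩
  have hadj' : S'.Adj a b := by
    rw [hS', sup_adj, fromEdgeSet_adj]
    exact Or.inr ⟨rfl, hab⟩
  have hsides := aux_sides hS hp he
  -- connectivity
  have huvS' : S'.Reachable u v := by
    rcases hsides with ⟨ha, hb⟩ | ⟨ha, hb⟩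
    · exact (ha.mono hDS').symm.trans (hadj'.reachable.trans (hb.mono hDS'))
    · exact (hb.mono hDS').symm.trans (hadj'.reachable.symm.trans (ha.mono hDS'))
  have hreachu : ∀ c, S'.Reachable c u := by
    intro c
    rcases aux_reach_or hS.isConnected u v c with h | h
    · exact h.mono hDS'
    · exact (h.mono hDS').trans huvS'.symm
  have hconn : S'.Connected := by
    rw [connected_iff]
    refine ⟨fun c d => (hreachu c).trans (hreachu d).symm, hS.isConnected.nonempty⟩
  -- acyclicity
  have hacyc : S'.IsAcyclic := by
    intro c q hq
    by_cases hmem : s(a, b) ∈ q.edges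
    · have : S'.Adj a b ∧ (S' \ fromEdgeSet {s(a, b)}).Reachable a b :=
        (adj_and_reachable_delete_edges_iff_exists_cycle).2 ⟨c, q, hq, hmem⟩
      have hle : (S' \ fromEdgeSet {s(a, b)}) ≤ D := by
        intro x y hxy
        rw [sdiff_adj] at hxy
        obtain ⟨hxy1, hxy2⟩ := hxy
        rw [hS', sup_adj] at hxy1
        rcases hxy1 with h | h
        · exact h
        · exact absurd h hxy2
      have hrab : D.Reachable a b := this.2.mono hle
      rcases hsides with ⟨ha, hb⟩ | ⟨ha, hb⟩
      · exact hnr (ha.symm.trans (hrab.trans hb))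
      · exact hnr (hb.symm.trans (hrab.symm.trans ha))
    · have hsub : ∀ e ∈ q.edges, e ∈ S.edgeSet := by
        intro e hee
        have h1 : e ∈ S'.edgeSet := Walk.edges_subset_edgeSet _ hee
        rw [hedge] at h1
        rcases h1 with h1 | h1
        · exact h1.1
        · rw [Set.mem_singleton_iff] at h1
          exact absurd (h1 ▸ hee) hmem
      exact hS.IsAcyclic (q.transfer S hsub) (hq.transfer hsub)
  exact ⟨⟨hconn, hacyc⟩, hedge⟩

lemma aux_totalWeight_swap (w : Sym2 V → ℝ) {G G' : SimpleGraph V} {f e : Sym2 V}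
    (hG' : G'.edgeSet = (G.edgeSet \ {f}) ∪ {e}) (hf : f ∈ G.edgeSet)
    (he : e ∉ G.edgeSet \ ({f} : Set (Sym2 V))) :
    totalWeight w G' = totalWeight w G - w f + w e := by
  classical
  set A := (Set.toFinite G.edgeSet).toFinset with hA
  have hfin : (Set.toFinite G'.edgeSet).toFinset = insert e (A.erase f) := by
    ext x
    simp only [Set.Finite.mem_toFinset, hG', Set.mem_union, Set.mem_diff,
      Set.mem_singleton_iff, Finset.mem_insert, Finset.mem_erase, hA]
    tauto
  have hfA : f ∈ A := by simpa [hA, Set.Finite.mem_toFinset] using hf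
  have heA : e ∉ A.erase f := by
    simp only [Finset.mem_erase, hA, Set.Finite.mem_toFinset]
    intro hc
    exact he ⟨hc.2, hc.1⟩
  rw [totalWeight, hfin, Finset.sum_insert heA, Finset.sum_erase_eq_sub hfA]
  show w e + (totalWeight w G - w f) = _
  ring

-- SL basics
lemma aux_zero_ultra : IsUltrametric (fun _ : Sym2 V => (0:ℝ)) :=
  ⟨⟨fun _ => le_refl 0, fun _ => rfl⟩, fun _ _ _ => by simp⟩

lemma aux_SL_nonempty (w : Sym2 V → ℝ) (hw : IsWeight w) (e : Sym2 V) :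
    (0:ℝ) ∈ {r | ∃ u : Sym2 V → ℝ, IsUltrametric u ∧ u ≤ w ∧ u e = r} :=
  ⟨fun _ => 0, aux_zero_ultra, fun e' => hw.1 e', rfl⟩

lemma aux_SL_bdd (w : Sym2 V → ℝ) (e : Sym2 V) :
    BddAbove {r | ∃ u : Sym2 V → ℝ, IsUltrametric u ∧ u ≤ w ∧ u e = r} := by
  refine ⟨w e, ?_⟩
  rintro r ⟨u, _, hle, rfl⟩
  exact hle e

lemma aux_SL_le (w : Sym2 V → ℝ) (hw : IsWeight w) (e : Sym2 V) : SL w e ≤ w e := by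
  refine csSup_le ⟨0, aux_SL_nonempty w hw e⟩ ?_
  rintro r ⟨u, _, hle, rfl⟩
  exact hle e

lemma aux_le_SL (w : Sym2 V → ℝ) {u : Sym2 V → ℝ} (hu : IsUltrametric u) (hle : u ≤ w)
    (e : Sym2 V) : u e ≤ SL w e :=
  le_csSup (aux_SL_bdd w e) ⟨u, hu, hle, rfl⟩

lemma aux_SL_nonneg (w : Sym2 V → ℝ) (hw : IsWeight w) (e : Sym2 V) : 0 ≤ SL w e :=
  aux_le_SL w aux_zero_ultra (fun e' => hw.1 e') e

-- crossing edge along a walk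
lemma aux_exists_crossing {D S : SimpleGraph V} {a b : V}
    (hall : ∀ c, D.Reachable c a ∨ D.Reachable c b) (hnab : ¬ D.Reachable a b) :
    ∀ (x y : V) (p : S.Walk x y), D.Reachable x a → D.Reachable y b →
      ∃ c d, s(c, d) ∈ p.edges ∧ D.Reachable c a ∧ D.Reachable d b := by
  intro x y p
  induction p with
  | nil => exact fun hx hy => absurd (hx.symm.trans hy) hnab
  | @cons c d _ h q ih =>
    intro hx hy
    rcases hall d with hd | hd
    · obtain ⟨c', d', hcd, hc', hd'⟩ := ih hd hy
      exact ⟨c', d', List.mem_cons_of_mem _ hcd, hc', hd'⟩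
    · exact ⟨c, d, by simp, hx, hd⟩

-- edge count of a tree
lemma aux_card_edges {G : SimpleGraph V} (hG : G.IsTree) :
    (Set.toFinite G.edgeSet).toFinset.card + 1 = Fintype.card V := by
  classical
  have h := hG.card_edgeFinset
  have : G.edgeFinset = (Set.toFinite G.edgeSet).toFinset := by
    ext e
    rw [mem_edgeFinset, Set.Finite.mem_toFinset]
  rwa [this] at h

lemma aux_alpha_le_w {w : Sym2 V → ℝ} {T : SimpleGraph V} (hw : IsWeight w)
    (hT : IsMST w T) (x y : V) : alpha T hT.1 w x y ≤ w s(x, y) := by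
  have ht := hT.1
  by_cases hxy : x = y
  · subst hxy
    rw [aux_alpha_self]
    exact hw.1 _
  obtain ⟨p, hp⟩ := (ht.existsUnique_path x y).exists
  rw [aux_alpha_eq ht w p hp]
  refine aux_pathMax_le w p (hw.1 _) ?_
  intro g hg
  revert hg
  induction g using Sym2.ind with
  | _ c d =>
  intro hg
  by_cases hcase : s(c, d) = s(x, y)
  · rw [hcase]
  · have hxyE : s(x, y) ∉ T.edgeSet := by
      intro hmem
      have hadj : T.Adj x y := hmem
      have hp1 : (Walk.cons hadj Walk.nil).IsPath := by simp [hadj.ne]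
      have heqp := (ht.existsUnique_path x y).unique hp hp1
      rw [heqp] at hg
      simp only [Walk.edges_cons, Walk.edges_nil, List.mem_singleton] at hg
      exact hcase hg
    obtain ⟨hS', hedge⟩ := aux_swap ht hxy hp hg
    have hfE : s(c, d) ∈ T.edgeSet := p.edges_subset_edgeSet hg
    have hxy' : s(x, y) ∉ T.edgeSet \ ({s(c, d)} : Set (Sym2 V)) := fun hc => hxyE hc.1
    have h1 := hT.2 _ hS'
    have h2 := aux_totalWeight_swap w hedge hfE hxy'
    linarith

lemma aux_alphaU {w : Sym2 V → ℝ} {T : SimpleGraph V} (hw : IsWeight w) (hT : IsMST w T) :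
    ∃ u : Sym2 V → ℝ, IsUltrametric u ∧ u ≤ w ∧ ∀ x y, u s(x, y) = alpha T hT.1 w x y := by
  refine ⟨Sym2.lift ⟨alpha T hT.1 w, aux_alpha_comm hT.1 w⟩, ⟨⟨?_, ?_⟩, ?_⟩, ?_, ?_⟩
  · intro e
    induction e using Sym2.ind with
    | _ a b => simpa [Sym2.lift_mk] using aux_alpha_nonneg hT.1 w a b
  · intro x
    simpa [Sym2.lift_mk] using aux_alpha_self hT.1 w x
  · intro x y z
    simpa [Sym2.lift_mk] using aux_alpha_ultra hT.1 w x y z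
  · intro e
    induction e using Sym2.ind with
    | _ a b => simpa [Sym2.lift_mk] using aux_alpha_le_w hw hT a b
  · intro x y
    simp [Sym2.lift_mk]

lemma aux_SL_edge {w : Sym2 V → ℝ} {T : SimpleGraph V} (hw : IsWeight w) (hT : IsMST w T)
    {e : Sym2 V} (he : e ∈ T.edgeSet) : SL w e = w e := by
  obtain ⟨u, hu, hle, heq⟩ := aux_alphaU hw hT
  revert he
  induction e using Sym2.ind with
  | _ a b =>
  intro he
  refine le_antisymm (aux_SL_le w hw _) ?_
  have hadj : T.Adj a b := he
  have h1 : u s(a, b) = w s(a, b) := by rw [heq, aux_alpha_adj hT.1 hw.1 hadj]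
  calc w s(a, b) = u s(a, b) := h1.symm
    _ ≤ SL w s(a, b) := aux_le_SL w hu hle _


/-- an MST of `w` is also an MST of `SL w`. -/
theorem mst_of_SL (w : Sym2 V → ℝ) (hw : IsWeight w)
    (T : SimpleGraph V) (hT : IsMST w T) : IsMST (SL w) T := by
  obtain ⟨u, hu, hule, hueq⟩ := aux_alphaU hw hT
  have ht := hT.1
  refine ⟨ht, ?_⟩
  have key : ∀ n, ∀ S : SimpleGraph V, S.IsTree →
      ((Set.toFinite S.edgeSet).toFinset \ (Set.toFinite T.edgeSet).toFinset).card ≤ n →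
      totalWeight (SL w) T ≤ totalWeight (SL w) S := by
    intro n
    induction n with
    | zero =>
      intro S hS hcard
      have hsub : (Set.toFinite S.edgeSet).toFinset ⊆ (Set.toFinite T.edgeSet).toFinset :=
        Finset.sdiff_eq_empty_iff_subset.1 (Finset.card_eq_zero.1 (Nat.le_zero.1 hcard))
      have hc1 := aux_card_edges hS
      have hc2 := aux_card_edges ht
      have heq2 : (Set.toFinite S.edgeSet).toFinset = (Set.toFinite T.edgeSet).toFinset :=
        Finset.eq_of_subset_of_card_le hsub (by omega)
      have hST : S = T := by
        rw [← edgeSet_inj]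
        ext g
        have := Finset.ext_iff.1 heq2 g
        simpa [Set.Finite.mem_toFinset] using this
      exact le_of_eq (by rw [hST])
    | succ n ih =>
      intro S hS hcard
      by_cases h0 : ((Set.toFinite S.edgeSet).toFinset \ (Set.toFinite T.edgeSet).toFinset).card ≤ n
      · exact ih S hS h0
      push_neg at h0
      have hne : ((Set.toFinite S.edgeSet).toFinset \ (Set.toFinite T.edgeSet).toFinset).Nonempty :=
        Finset.card_pos.1 (by omega)
      have hc1 := aux_card_edges hS
      have hc2 := aux_card_edges ht
      have hTSne : ((Set.toFinite T.edgeSet).toFinset \ (Set.toFinite S.edgeSet).toFinset).Nonempty := by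
        rw [← Finset.card_pos]
        have h1 := Finset.card_sdiff_add_card_inter (Set.toFinite S.edgeSet).toFinset
          (Set.toFinite T.edgeSet).toFinset
        have h2 := Finset.card_sdiff_add_card_inter (Set.toFinite T.edgeSet).toFinset
          (Set.toFinite S.edgeSet).toFinset
        have h3 : ((Set.toFinite S.edgeSet).toFinset ∩ (Set.toFinite T.edgeSet).toFinset).card
            = ((Set.toFinite T.edgeSet).toFinset ∩ (Set.toFinite S.edgeSet).toFinset).card := by
          rw [Finset.inter_comm]
        have h4 := Finset.card_pos.2 hne
        omega
      obtain ⟨e, heTS⟩ := hTSne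
      rw [Finset.mem_sdiff] at heTS
      have heT : e ∈ T.edgeSet := by simpa [Set.Finite.mem_toFinset] using heTS.1
      have heS : e ∉ S.edgeSet := by simpa [Set.Finite.mem_toFinset] using heTS.2
      clear heTS
      revert heT heS
      induction e using Sym2.ind with
      | _ a b =>
      intro heT heS
      have hadj : T.Adj a b := heT
      have hab : a ≠ b := hadj.ne
      have hnr : ¬ (T.deleteEdges {s(a, b)}).Reachable a b :=
        aux_not_reach_delete ht.IsAcyclic hadj
      have hall := aux_reach_or ht.isConnected a b
      obtain ⟨p, hp⟩ := (hS.existsUnique_path a b).exists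
      obtain ⟨x, y, hxyp, hxa, hyb⟩ :=
        aux_exists_crossing hall hnr a b p (Reachable.refl a) (Reachable.refl b)
      have hfS : s(x, y) ∈ S.edgeSet := p.edges_subset_edgeSet hxyp
      have hfT : s(x, y) ∉ T.edgeSet := by
        intro hmem
        have hne' : s(x, y) ≠ s(a, b) := fun h => heS (h ▸ hfS)
        have hDadj : (T.deleteEdges {s(a, b)}).Adj x y := by
          rw [deleteEdges_adj]
          exact ⟨hmem, by simpa using hne'⟩
        exact hnr (hxa.symm.trans (hDadj.reachable.trans hyb))
      obtain ⟨hS'tree, hedge⟩ := aux_swap hS hab hp hxyp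
      have habS : s(a, b) ∉ S.edgeSet \ ({s(x, y)} : Set (Sym2 V)) := fun hc => heS hc.1
      have htw := aux_totalWeight_swap (SL w) hedge hfS habS
      -- SL w s(a,b) ≤ SL w s(x,y)
      obtain ⟨q, hq⟩ := (ht.existsUnique_path x y).exists
      have hmemq : s(a, b) ∈ q.edges := by
        by_contra hmemq
        have hsubq : ∀ g ∈ q.edges, g ∈ (T.deleteEdges {s(a, b)}).edgeSet := by
          intro g hg
          rw [edgeSet_deleteEdges]
          refine ⟨q.edges_subset_edgeSet hg, ?_⟩
          intro hgg
          rw [Set.mem_singleton_iff] at hgg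
          exact hmemq (hgg ▸ hg)
        have hxyD : (T.deleteEdges {s(a, b)}).Reachable x y := ⟨q.transfer _ hsubq⟩
        exact hnr (hxa.symm.trans (hxyD.trans hyb))
      have halq : w s(a, b) ≤ alpha T hT.1 w x y := by
        rw [aux_alpha_eq hT.1 w q hq]
        exact aux_le_pathMax w q hmemq
      have hSLab : SL w s(a, b) = w s(a, b) := aux_SL_edge hw hT heT
      have hSLle : SL w s(a, b) ≤ SL w s(x, y) := by
        rw [hSLab]
        calc w s(a, b) ≤ alpha T hT.1 w x y := halq
          _ = u s(x, y) := (hueq x y).symm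
          _ ≤ SL w s(x, y) := aux_le_SL w hu hule _
      -- measure decreases
      set S' := (S.deleteEdges {s(x, y)}) ⊔ fromEdgeSet {s(a, b)} with hS'def
      have hsub' : (Set.toFinite S'.edgeSet).toFinset \ (Set.toFinite T.edgeSet).toFinset ⊆
          ((Set.toFinite S.edgeSet).toFinset \ (Set.toFinite T.edgeSet).toFinset).erase s(x, y) := by
        intro g hg
        rw [Finset.mem_sdiff, Set.Finite.mem_toFinset, Set.Finite.mem_toFinset] at hg
        obtain ⟨hg1, hg2⟩ := hg
        rw [hedge] at hg1
        rcases hg1 with hg1 | hg1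
        · rw [Finset.mem_erase, Finset.mem_sdiff, Set.Finite.mem_toFinset,
            Set.Finite.mem_toFinset]
          exact ⟨hg1.2, hg1.1, hg2⟩
        · rw [Set.mem_singleton_iff] at hg1
          exact absurd (hg1 ▸ heT) hg2
      have hfmem : s(x, y) ∈ (Set.toFinite S.edgeSet).toFinset \
          (Set.toFinite T.edgeSet).toFinset := by
        rw [Finset.mem_sdiff, Set.Finite.mem_toFinset, Set.Finite.mem_toFinset]
        exact ⟨hfS, hfT⟩
      have hcard' : ((Set.toFinite S'.edgeSet).toFinset \
          (Set.toFinite T.edgeSet).toFinset).card ≤ n := by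
        have hle1 := Finset.card_le_card hsub'
        have hle2 := Finset.card_erase_of_mem hfmem
        omega
      calc totalWeight (SL w) T ≤ totalWeight (SL w) S' := ih S' hS'tree hcard'
        _ = totalWeight (SL w) S - SL w s(x, y) + SL w s(a, b) := htw
        _ ≤ totalWeight (SL w) S := by linarith
  intro T' hT'
  exact key _ T' hT' le_rfl
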